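/- Let μ be a probability measure on M, let r ≥ 0 be real, and let n ≥ 1 be a natural number. Then (e^{(r/n)(μ⋆−1)})^{*n} = e^{r(μ⋆−1)}. Consequently, every convolution exponential is infinitely divisible: for every n ≥ 1 there exists a probability measure ν on M with ν^{*n} = e^{r(μ⋆−1)}. -/

import Mathlib

open MeasureTheory Measure
open scoped ENNReal

/-- n-fold convolution power, with `μ^{*0} = δ_1`. -/
noncomputable def mconvPow {M : Type*} [Monoid M] [MeasurableSpace M]
    (μ : Measure M) : ℕ → Measure M
  | 0 => Measure.dirac 1
  | n + 1 => Measure.mconv (mconvPow μ n) μ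

/-- The convolution exponential `e^{r(μ⋆−1)} = e^{−r} ∑ (r^n/n!) • μ^{*n}`. -/
noncomputable def convExp {M : Type*} [Monoid M] [MeasurableSpace M]
    (μ : Measure M) (r : ℝ) : Measure M :=
  ENNReal.ofReal (Real.exp (-r)) •
    Measure.sum fun n => ENNReal.ofReal (r ^ n / n.factorial) • mconvPow μ n

section aux
variable {M : Type*} [Monoid M] [MeasurableSpace M]

lemma prod_smul_left {α β : Type*} [MeasurableSpace α] [MeasurableSpace β]
    (c : ℝ≥0∞) (μ : Measure α) (ν : Measure β) [SFinite ν] :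
    (c • μ).prod ν = c • μ.prod ν := by
  ext s hs
  rw [Measure.prod_apply hs, lintegral_smul_measure, Measure.smul_apply,
    Measure.prod_apply hs, smul_eq_mul]

lemma smul_mconv' [MeasurableMul₂ M] (c : ℝ≥0∞) (μ ν : Measure M) [SFinite ν] :
    (c • μ) ∗ₘ ν = c • (μ ∗ₘ ν) := by
  unfold Measure.mconv
  rw [_root_.prod_smul_left, Measure.map_smul]

lemma mconv_smul' {M : Type*} [CommMonoid M] [MeasurableSpace M] [MeasurableMul₂ M]
    (c : ℝ≥0∞) (μ ν : Measure M) [SFinite μ] [SFinite ν] :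
    μ ∗ₘ (c • ν) = c • (μ ∗ₘ ν) := by
  rw [Measure.mconv_comm, smul_mconv', Measure.mconv_comm]

lemma sum_mconv' [MeasurableMul₂ M] {ι : Type*} (m : ι → Measure M) (ν : Measure M) [SFinite ν] :
    (Measure.sum m) ∗ₘ ν = Measure.sum (fun i => m i ∗ₘ ν) := by
  unfold Measure.mconv
  rw [Measure.prod_sum_left, Measure.map_sum (by fun_prop)]

lemma mconv_sum' [MeasurableMul₂ M] {ι : Type*} [Countable ι] (μ : Measure M)
    (m : ι → Measure M) [∀ i, SFinite (m i)] :
    μ ∗ₘ (Measure.sum m) = Measure.sum (fun i => μ ∗ₘ m i) := by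
  unfold Measure.mconv
  rw [Measure.prod_sum_right, Measure.map_sum (by fun_prop)]

lemma smul_sum' {α ι : Type*} [MeasurableSpace α] (c : ℝ≥0∞) (m : ι → Measure α) :
    c • Measure.sum m = Measure.sum (fun i => c • m i) := by
  ext s hs
  simp [Measure.sum_apply _ hs, ENNReal.tsum_mul_left]

end aux

section assoc
variable {M : Type*} [CommMonoid M] [MeasurableSpace M] [MeasurableMul₂ M]

lemma mconv_assoc' (μ ν ρ : Measure M) [SFinite μ] [SFinite ν] [SFinite ρ] :
    (μ ∗ₘ ν) ∗ₘ ρ = μ ∗ₘ (ν ∗ₘ ρ) := by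
  unfold Measure.mconv
  have h1 : (Measure.map (fun x : M × M => x.1 * x.2) (μ.prod ν)).prod ρ
      = Measure.map (Prod.map (fun x : M × M => x.1 * x.2) id) ((μ.prod ν).prod ρ) := by
    conv_lhs => rw [← Measure.map_id (μ := ρ)]
    exact Measure.map_prod_map _ _ (by fun_prop) measurable_id
  have h2 : μ.prod (Measure.map (fun x : M × M => x.1 * x.2) (ν.prod ρ))
      = Measure.map (Prod.map id (fun x : M × M => x.1 * x.2)) (μ.prod (ν.prod ρ)) := by
    conv_lhs => rw [← Measure.map_id (μ := μ)]
    exact Measure.map_prod_map _ _ measurable_id (by fun_prop)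
  rw [h1, h2, Measure.map_map (by fun_prop) (by fun_prop), ← Measure.prodAssoc_prod,
    Measure.map_map (by fun_prop) (by fun_prop),
    Measure.map_map (by fun_prop) (by fun_prop)]
  congr 1
  ext ⟨⟨x, y⟩, z⟩
  simp [MeasurableEquiv.prodAssoc, Function.comp, mul_assoc]

instance mconvPow_prob (μ : Measure M) [IsProbabilityMeasure μ] (n : ℕ) :
    IsProbabilityMeasure (mconvPow μ n) := by
  induction n with
  | zero => unfold mconvPow; infer_instance
  | succ n ih => unfold mconvPow; infer_instance

lemma mconvPow_add (μ : Measure M) [IsProbabilityMeasure μ] (i j : ℕ) :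
    mconvPow μ i ∗ₘ mconvPow μ j = mconvPow μ (i + j) := by
  induction j with
  | zero => simpa [mconvPow] using Measure.mconv_dirac_one _
  | succ j ih =>
      show mconvPow μ i ∗ₘ (mconvPow μ j ∗ₘ μ) = _
      rw [← mconv_assoc', ih]
      rfl

end assoc

section coeffs

lemma tsum_ofReal_exp {r : ℝ} (hr : 0 ≤ r) :
    ∑' n : ℕ, ENNReal.ofReal (r ^ n / n.factorial) = ENNReal.ofReal (Real.exp r) := by
  rw [← ENNReal.ofReal_tsum_of_nonneg (fun n => by positivity)
    (Real.summable_pow_div_factorial r)]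
  congr 1
  rw [Real.exp_eq_exp_ℝ, NormedSpace.exp_eq_tsum_div]

lemma real_coeff (a b : ℝ) (n : ℕ) :
    ∑ kl ∈ Finset.HasAntidiagonal.antidiagonal n, a ^ kl.1 / kl.1.factorial * (b ^ kl.2 / kl.2.factorial)
      = (a + b) ^ n / n.factorial := by
  rw [Finset.Nat.sum_antidiagonal_eq_sum_range_succ
    (fun k l => a ^ k / k.factorial * (b ^ l / l.factorial)) n, add_pow, Finset.sum_div]
  refine Finset.sum_congr rfl fun k hk => ?_
  have hk' : k ≤ n := Nat.lt_succ_iff.mp (Finset.mem_range.mp hk)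
  have key : ((n.choose k : ℝ)) * (k.factorial * (n - k).factorial) = n.factorial := by
    exact_mod_cast congrArg (Nat.cast : ℕ → ℝ)
      (by rw [← mul_assoc]; exact Nat.choose_mul_factorial_mul_factorial hk')
  have h1 : (k.factorial : ℝ) ≠ 0 := Nat.cast_ne_zero.mpr k.factorial_ne_zero
  have h2 : ((n - k).factorial : ℝ) ≠ 0 := Nat.cast_ne_zero.mpr (n - k).factorial_ne_zero
  have h3 : (n.factorial : ℝ) ≠ 0 := Nat.cast_ne_zero.mpr n.factorial_ne_zero
  rw [div_mul_div_comm, div_eq_div_iff (by positivity) h3]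
  linear_combination (-(a ^ k * b ^ (n - k))) * key

lemma coeff_sum {a b : ℝ} (ha : 0 ≤ a) (hb : 0 ≤ b) (n : ℕ) :
    ∑ kl ∈ Finset.HasAntidiagonal.antidiagonal n,
        ENNReal.ofReal (a ^ kl.1 / kl.1.factorial) * ENNReal.ofReal (b ^ kl.2 / kl.2.factorial)
      = ENNReal.ofReal ((a + b) ^ n / n.factorial) := by
  have h : ∀ kl ∈ Finset.HasAntidiagonal.antidiagonal n,
      ENNReal.ofReal (a ^ kl.1 / kl.1.factorial) * ENNReal.ofReal (b ^ kl.2 / kl.2.factorial)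
        = ENNReal.ofReal (a ^ kl.1 / kl.1.factorial * (b ^ kl.2 / kl.2.factorial)) :=
    fun kl _ => (ENNReal.ofReal_mul (by positivity)).symm
  rw [Finset.sum_congr rfl h, ← ENNReal.ofReal_sum_of_nonneg (fun kl _ => by positivity),
    real_coeff]

lemma tsum_antidiag (g : ℕ × ℕ → ℝ≥0∞) :
    ∑' p : ℕ × ℕ, g p = ∑' n : ℕ, ∑ kl ∈ Finset.HasAntidiagonal.antidiagonal n, g kl := by
  rw [← Finset.HasAntidiagonal.sigmaAntidiagonalEquivProd.tsum_eq g, ENNReal.tsum_sigma']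
  exact tsum_congr fun n => by rw [← Finset.tsum_subtype]; exact tsum_congr fun b => rfl

end coeffs

section main
variable {M : Type*} [CommMonoid M] [MeasurableSpace M] [MeasurableMul₂ M]

lemma convExp_prob (μ : Measure M) [IsProbabilityMeasure μ] {r : ℝ} (hr : 0 ≤ r) :
    IsProbabilityMeasure (convExp μ r) := by
  constructor
  rw [convExp, Measure.smul_apply, Measure.sum_apply _ MeasurableSet.univ]
  simp only [Measure.smul_apply, measure_univ, smul_eq_mul, mul_one]
  rw [tsum_ofReal_exp hr, ← ENNReal.ofReal_mul (Real.exp_nonneg _),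
    ← Real.exp_add, neg_add_cancel, Real.exp_zero, ENNReal.ofReal_one]

instance convExp_sfinite (μ : Measure M) [IsProbabilityMeasure μ] (r : ℝ) : SFinite (convExp μ r) := by
  unfold convExp; infer_instance

lemma convExp_mconv (μ : Measure M) [IsProbabilityMeasure μ] {a b : ℝ}
    (ha : 0 ≤ a) (hb : 0 ≤ b) :
    (convExp μ a) ∗ₘ (convExp μ b) = convExp μ (a + b) := by
  unfold convExp
  rw [smul_mconv', mconv_smul', smul_smul, ← ENNReal.ofReal_mul (Real.exp_nonneg _),
    ← Real.exp_add, ← neg_add]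
  congr 1
  rw [sum_mconv']
  have step : ∀ i : ℕ,
      (ENNReal.ofReal (a ^ i / i.factorial) • mconvPow μ i) ∗ₘ
          (Measure.sum fun j => ENNReal.ofReal (b ^ j / j.factorial) • mconvPow μ j)
        = Measure.sum fun j =>
            (ENNReal.ofReal (a ^ i / i.factorial) * ENNReal.ofReal (b ^ j / j.factorial)) •
              mconvPow μ (i + j) := by
    intro i
    rw [smul_mconv', mconv_sum', smul_sum']
    congr 1
    ext j : 1
    rw [mconv_smul', mconvPow_add, smul_smul]
  simp_rw [step]
  rw [Measure.sum_sum]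
  ext s hs
  rw [Measure.sum_apply _ hs, Measure.sum_apply _ hs]
  simp only [Measure.smul_apply, smul_eq_mul]
  rw [tsum_antidiag fun p : ℕ × ℕ =>
    (ENNReal.ofReal (a ^ p.1 / p.1.factorial) * ENNReal.ofReal (b ^ p.2 / p.2.factorial)) *
      mconvPow μ (p.1 + p.2) s]
  refine tsum_congr fun n => ?_
  have h : ∀ kl ∈ Finset.HasAntidiagonal.antidiagonal n,
      (ENNReal.ofReal (a ^ kl.1 / kl.1.factorial) * ENNReal.ofReal (b ^ kl.2 / kl.2.factorial)) *
          mconvPow μ (kl.1 + kl.2) s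
        = (ENNReal.ofReal (a ^ kl.1 / kl.1.factorial) *
            ENNReal.ofReal (b ^ kl.2 / kl.2.factorial)) * mconvPow μ n s := by
    intro kl hkl
    rw [Finset.HasAntidiagonal.mem_antidiagonal.mp hkl]
  rw [Finset.sum_congr rfl h, ← Finset.sum_mul, coeff_sum ha hb]

lemma mconvPow_convExp (μ : Measure M) [IsProbabilityMeasure μ] {c : ℝ} (hc : 0 ≤ c) :
    ∀ k : ℕ, mconvPow (convExp μ c) (k + 1) = convExp μ ((k + 1 : ℕ) * c) := by
  have := convExp_prob μ hc
  intro k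
  induction k with
  | zero =>
      show Measure.dirac 1 ∗ₘ convExp μ c = _
      rw [Measure.dirac_one_mconv]
      norm_num
  | succ k ih =>
      show mconvPow (convExp μ c) (k + 1) ∗ₘ convExp μ c = _
      rw [ih, convExp_mconv μ (by positivity) hc]
      congr 1
      push_cast
      ring

end main

theorem stmt11 {M : Type*} [CommMonoid M] [MeasurableSpace M] [MeasurableMul₂ M]
    (μ : Measure M) [IsProbabilityMeasure μ]
    (r : ℝ) (hr : 0 ≤ r) (n : ℕ) (hn : 1 ≤ n) :
    mconvPow (convExp μ (r / n)) n = convExp μ r ∧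
      ∃ ν : Measure M, IsProbabilityMeasure ν ∧ mconvPow ν n = convExp μ r := by
  obtain ⟨k, rfl⟩ : ∃ k, n = k + 1 := ⟨n - 1, by omega⟩
  have hc : 0 ≤ r / ((k + 1 : ℕ) : ℝ) := div_nonneg hr (Nat.cast_nonneg _)
  have hne : ((k + 1 : ℕ) : ℝ) ≠ 0 := Nat.cast_ne_zero.mpr (by omega)
  have key : mconvPow (convExp μ (r / ((k + 1 : ℕ) : ℝ))) (k + 1) = convExp μ r := by
    rw [mconvPow_convExp μ hc k, mul_div_cancel₀ r hne]
  exact ⟨key, convExp μ (r / ((k + 1 : ℕ) : ℝ)), convExp_prob μ hc, key⟩
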